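/- Let p ≥ 3 be an integer and let f_p : [0,1] → [0,1] be defined by f_p(x) = 1 - x^{p-1}. If τ_0 ∈ (0, α_p) and τ_{m+1} = f_p(τ_m) for all m ∈ ℕ, then the subsequence (τ_{2m})_{m∈ℕ} converges to 0 and the subsequence (τ_{2m+1})_{m∈ℕ} converges to 1. Moreover f_p is a decreasing bijection of [0,1] onto itself. -/

import Mathlib

lemma key_ineq (q : ℕ) (hq : 2 ≤ q) (α : ℝ) (hα0 : 0 < α) (hα1 : α < 1)
    (hroot : α ^ q + α - 1 = 0) :
    ∀ x ∈ Set.Ioo (0 : ℝ) α, 1 - (1 - x ^ q) ^ q < x := by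
  obtain ⟨r, rfl⟩ : ∃ r, q = r + 1 := ⟨q - 1, by omega⟩
  have hr : 1 ≤ r := by omega
  -- main objects
  set G : ℝ → ℝ := fun x => (1 - x ^ (r + 1)) ^ (r + 1) + x - 1 with hGdef
  set D : ℝ → ℝ := fun x => 1 - ((r : ℝ) + 1) ^ 2 * x ^ r * (1 - x ^ (r + 1)) ^ r with hDdef
  set w : ℝ → ℝ := fun x => x * (1 - x ^ (r + 1)) with hwdef
  have hG : ∀ x : ℝ, HasDerivAt G (D x) x := by
    intro x
    have h1 : HasDerivAt (fun y : ℝ => 1 - y ^ (r + 1))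
        (-(((r : ℝ) + 1) * x ^ r)) x := by
      have := (hasDerivAt_pow (r + 1) x).const_sub 1
      simpa using this
    have h2 := (h1.pow (r + 1)).add (hasDerivAt_id x)
    have h3 := h2.sub_const 1
    refine h3.congr_deriv (Eq.symm ?_)
    simp only [Nat.add_sub_cancel, id_eq, D]
    push_cast
    ring_nf
  have hGc : ContinuousOn G (Set.Icc (0:ℝ) 1) := fun x _ => (hG x).continuousAt.continuousWithinAt
  -- critical point of w
  set c : ℝ := ((r : ℝ) + 2)⁻¹ ^ (((r : ℝ) + 1)⁻¹) with hcdef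
  have hr2 : (0:ℝ) < (r:ℝ) + 2 := by positivity
  have hc0 : 0 < c := Real.rpow_pos_of_pos (by positivity) _
  have hc1 : c < 1 := by
    apply Real.rpow_lt_one (by positivity) (by rw [inv_lt_one_iff₀]; right; linarith) (by positivity)
  have hcpow : c ^ (r + 1) = ((r : ℝ) + 2)⁻¹ := by
    rw [hcdef, ← Real.rpow_natCast (_ ^ _) (r + 1), ← Real.rpow_mul (by positivity)]
    push_cast
    rw [inv_mul_cancel₀ (by positivity), Real.rpow_one]
  have hw : ∀ x : ℝ, HasDerivAt w (1 - ((r : ℝ) + 2) * x ^ (r + 1)) x := by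
    intro x
    have h1 : HasDerivAt (fun y : ℝ => 1 - y ^ (r + 1))
        (-(((r : ℝ) + 1) * x ^ r)) x := by
      have := (hasDerivAt_pow (r + 1) x).const_sub 1
      simpa using this
    have h2 := (hasDerivAt_id x).mul h1
    refine h2.congr_deriv ?_
    simp only [id_eq]
    ring
  have hwc : ∀ s : Set ℝ, ContinuousOn w s := fun s x _ => (hw x).continuousAt.continuousWithinAt
  have hwmono : StrictMonoOn w (Set.Icc 0 c) := by
    apply strictMonoOn_of_deriv_pos (convex_Icc _ _) (hwc _)
    intro x hx
    rw [interior_Icc] at hx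
    rw [(hw x).deriv]
    have hxc : x ^ (r + 1) < c ^ (r + 1) := pow_lt_pow_left₀ hx.2 hx.1.le (by omega)
    rw [hcpow] at hxc
    have : ((r:ℝ) + 2) * x ^ (r+1) < ((r:ℝ) + 2) * ((r:ℝ)+2)⁻¹ := by
      exact mul_lt_mul_of_pos_left hxc hr2
    rw [mul_inv_cancel₀ (ne_of_gt hr2)] at this
    linarith
  have hwanti : StrictAntiOn w (Set.Icc c 1) := by
    apply strictAntiOn_of_deriv_neg (convex_Icc _ _) (hwc _)
    intro x hx
    rw [interior_Icc] at hx
    rw [(hw x).deriv]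
    have hxc : c ^ (r + 1) < x ^ (r + 1) := pow_lt_pow_left₀ hx.1 hc0.le (by omega)
    rw [hcpow] at hxc
    have : ((r:ℝ) + 2) * ((r:ℝ)+2)⁻¹ < ((r:ℝ) + 2) * x ^ (r+1) := by
      exact mul_lt_mul_of_pos_left hxc hr2
    rw [mul_inv_cancel₀ (ne_of_gt hr2)] at this
    linarith
  have hwnn : ∀ x ∈ Set.Icc (0:ℝ) 1, 0 ≤ w x := by
    intro x hx
    have : x ^ (r+1) ≤ 1 := pow_le_one₀ hx.1 hx.2
    have := hx.1
    simp only [hwdef]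
    nlinarith
  have hDanti : StrictAntiOn D (Set.Icc 0 c) := by
    intro x hx y hy hxy
    have hwy : w x < w y := hwmono hx hy hxy
    have hwxnn : 0 ≤ w x := hwnn x ⟨hx.1, hx.2.trans hc1.le⟩
    have hpow : (w x) ^ r < (w y) ^ r := pow_lt_pow_left₀ hwy hwxnn (by omega)
    simp only [hDdef]
    have h2 : ((r:ℝ)+1)^2 * (w x) ^ r < ((r:ℝ)+1)^2 * (w y) ^ r :=
      mul_lt_mul_of_pos_left hpow (by positivity)
    simp only [hwdef, mul_pow] at h2
    nlinarith [h2]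
  have hDmono : StrictMonoOn D (Set.Icc c 1) := by
    intro x hx y hy hxy
    have hwy : w y < w x := hwanti hx hy hxy
    have hwynn : 0 ≤ w y := hwnn y ⟨hc0.le.trans hy.1, hy.2⟩
    have hpow : (w y) ^ r < (w x) ^ r := pow_lt_pow_left₀ hwy hwynn (by omega)
    simp only [hDdef]
    have h2 : ((r:ℝ)+1)^2 * (w y) ^ r < ((r:ℝ)+1)^2 * (w x) ^ r :=
      mul_lt_mul_of_pos_left hpow (by positivity)
    simp only [hwdef, mul_pow] at h2
    nlinarith [h2]
  -- interval lemma for negativity of D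
  have hU : ∀ x y z : ℝ, 0 ≤ x → y ≤ 1 → x < z → z < y → D x ≤ 0 → D y ≤ 0 → D z < 0 := by
    intro x y z hx0 hy1 hxz hzy hDx hDy
    rcases le_or_gt z c with hzc | hcz
    · have := hDanti ⟨hx0, (hxz.le.trans hzc)⟩ ⟨hx0.trans hxz.le, hzc⟩ hxz
      linarith
    · have := hDmono ⟨hcz.le, hzy.le.trans hy1⟩ ⟨(hcz.trans hzy).le, hy1⟩ hzy
      linarith
  -- values of G
  have hαpow : α ^ (r + 1) = 1 - α := by linarith
  have hG0 : G 0 = 0 := by simp [hGdef]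
  have hGα : G α = 0 := by
    simp only [hGdef]
    rw [hαpow]
    have h2 : (1:ℝ) - (1 - α) = α := by ring
    rw [h2, hαpow]
    ring
  have hG1 : G 1 = 0 := by simp [hGdef]
  -- main argument
  intro x₀ hx₀
  by_contra hcon
  push_neg at hcon
  have hGx₀ : G x₀ ≤ 0 := by simp only [hGdef]; linarith
  have hx₀1 : x₀ < 1 := hx₀.2.trans hα1
  -- MVT on [0, x₀]
  obtain ⟨s, hs, hDs⟩ := exists_hasDerivAt_eq_slope G D hx₀.1
    (hGc.mono (Set.Icc_subset_Icc le_rfl hx₀1.le)) (fun x _ => hG x)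
  have hDs0 : D s ≤ 0 := by
    rw [hDs, hG0]
    simp only [sub_zero]
    exact div_nonpos_of_nonpos_of_nonneg hGx₀ hx₀.1.le
  -- MVT on [α, 1]
  obtain ⟨u, hu, hDu⟩ := exists_hasDerivAt_eq_slope G D hα1
    (hGc.mono (Set.Icc_subset_Icc hα0.le le_rfl)) (fun x _ => hG x)
  have hDu0 : D u ≤ 0 := by rw [hDu, hG1, hGα]; simp
  -- G strictly decreasing on [x₀, α]
  have hanti : StrictAntiOn G (Set.Icc x₀ α) := by
    apply strictAntiOn_of_deriv_neg (convex_Icc _ _)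
      (hGc.mono (Set.Icc_subset_Icc hx₀.1.le hα1.le))
    intro z hz
    rw [interior_Icc] at hz
    rw [(hG z).deriv]
    exact hU s u z hs.1.le hu.2.le (hs.2.trans hz.1) (hz.2.trans hu.1) hDs0 hDu0
  have := hanti (Set.left_mem_Icc.2 hx₀.2.le) (Set.right_mem_Icc.2 hx₀.2.le) hx₀.2
  rw [hGα] at this
  linarith

theorem f_iteration_dynamics (p : ℕ) (hp : 3 ≤ p) (α : ℝ)
    (hα : α ∈ Set.Ioo (0 : ℝ) 1) (hroot : α ^ (p - 1) + α - 1 = 0)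
    (f : ℝ → ℝ) (hf : ∀ x : ℝ, f x = 1 - x ^ (p - 1))
    (τ : ℕ → ℝ) (hτ0 : τ 0 ∈ Set.Ioo (0 : ℝ) α)
    (hτ : ∀ m : ℕ, τ (m + 1) = f (τ m)) :
    Filter.Tendsto (fun m : ℕ => τ (2 * m)) Filter.atTop (nhds 0) ∧
    Filter.Tendsto (fun m : ℕ => τ (2 * m + 1)) Filter.atTop (nhds 1) ∧
    StrictAntiOn f (Set.Icc (0 : ℝ) 1) ∧
    Set.BijOn f (Set.Icc (0 : ℝ) 1) (Set.Icc (0 : ℝ) 1) := by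
  obtain ⟨hα0, hα1⟩ := hα
  set q := p - 1 with hqdef
  have hq : 2 ≤ q := by omega
  have hq0 : q ≠ 0 := by omega
  have hkey := key_ineq q hq α hα0 hα1 hroot
  -- basic values of f
  have hf0 : f 0 = 1 := by rw [hf, zero_pow hq0]; ring
  have hf1 : f 1 = 0 := by rw [hf, one_pow]; ring
  have hfα : f α = α := by rw [hf]; linarith
  have hfc : Continuous f := by
    have : f = fun x : ℝ => 1 - x ^ q := funext hf
    rw [this]; continuity
  -- strict antitonicity
  have hanti : StrictAntiOn f (Set.Icc (0 : ℝ) 1) := by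
    intro x hx y hy hxy
    rw [hf, hf]
    have : x ^ q < y ^ q := pow_lt_pow_left₀ hxy hx.1 hq0
    linarith
  -- f maps (0, α) into (α, 1) and (α,1) into (0,α)
  have hmap1 : ∀ x ∈ Set.Ioo (0:ℝ) α, f x ∈ Set.Ioo α 1 := by
    intro x hx
    have hx1 : x ∈ Set.Icc (0:ℝ) 1 := ⟨hx.1.le, (hx.2.trans hα1).le⟩
    have hαm : α ∈ Set.Icc (0:ℝ) 1 := ⟨hα0.le, hα1.le⟩
    have h0m : (0:ℝ) ∈ Set.Icc (0:ℝ) 1 := ⟨le_rfl, zero_le_one⟩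
    constructor
    · have := hanti hx1 hαm hx.2; rw [hfα] at this; exact this
    · have := hanti h0m hx1 hx.1; rw [hf0] at this; exact this
  have hmap2 : ∀ x ∈ Set.Ioo α (1:ℝ), f x ∈ Set.Ioo (0:ℝ) α := by
    intro x hx
    have hx1 : x ∈ Set.Icc (0:ℝ) 1 := ⟨(hα0.trans hx.1).le, hx.2.le⟩
    have hαm : α ∈ Set.Icc (0:ℝ) 1 := ⟨hα0.le, hα1.le⟩
    have h1m : (1:ℝ) ∈ Set.Icc (0:ℝ) 1 := ⟨zero_le_one, le_rfl⟩
    constructor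
    · have := hanti hx1 h1m hx.2; rw [hf1] at this; exact this
    · have := hanti hαm hx1 hx.1; rw [hfα] at this; exact this
  -- the even subsequence
  set x : ℕ → ℝ := fun m => τ (2 * m) with hxdef
  have hstep : ∀ m, x (m + 1) = f (f (x m)) := by
    intro m
    have h1 : 2 * (m + 1) = (2 * m + 1) + 1 := by ring
    simp only [hxdef, h1, hτ]
  have hmem : ∀ m, x m ∈ Set.Ioo (0:ℝ) α := by
    intro m
    induction m with
    | zero => exact hτ0
    | succ n ih =>
      rw [hstep n]
      exact hmap2 _ (hmap1 _ ih)
  have hltkey : ∀ y ∈ Set.Ioo (0:ℝ) α, f (f y) < y := by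
    intro y hy
    have h1 := hkey y hy
    rw [hf, hf]
    exact h1
  have hdec : ∀ m, x (m + 1) < x m := fun m => by
    rw [hstep m]; exact hltkey _ (hmem m)
  have hant : Antitone x := antitone_nat_of_succ_le fun n => (hdec n).le
  have hbdd : BddBelow (Set.range x) := by
    refine ⟨0, ?_⟩
    rintro y ⟨m, rfl⟩
    exact (hmem m).1.le
  have hL : Filter.Tendsto x Filter.atTop (nhds (⨅ i, x i)) :=
    tendsto_atTop_ciInf hant hbdd
  set L := ⨅ i, x i with hLdef
  have hL0 : 0 ≤ L := le_ciInf fun m => (hmem m).1.le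
  have hLα : L < α := lt_of_le_of_lt (ciInf_le hbdd 0) (hmem 0).2
  -- L is a fixed point of f ∘ f
  have hfix : f (f L) = L := by
    have h1 : Filter.Tendsto (fun m => x (m + 1)) Filter.atTop (nhds L) :=
      (Filter.tendsto_add_atTop_iff_nat 1).mpr hL
    have h2 : Filter.Tendsto (fun m => f (f (x m))) Filter.atTop (nhds (f (f L))) :=
      ((hfc.tendsto (f L)).comp ((hfc.tendsto L).comp hL))
    have h3 : (fun m => x (m + 1)) = fun m => f (f (x m)) := funext hstep
    rw [h3] at h1
    exact tendsto_nhds_unique h2 h1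
  have hLzero : L = 0 := by
    by_contra hne
    have hLpos : 0 < L := lt_of_le_of_ne hL0 (Ne.symm hne)
    have := hltkey L ⟨hLpos, hLα⟩
    rw [hfix] at this
    exact lt_irrefl _ this
  rw [hLzero] at hL
  -- odd subsequence
  have hodd : Filter.Tendsto (fun m : ℕ => τ (2 * m + 1)) Filter.atTop (nhds 1) := by
    have h1 : (fun m : ℕ => τ (2 * m + 1)) = fun m => f (x m) := by
      funext m; exact hτ (2 * m)
    rw [h1]
    have := (hfc.tendsto 0).comp hL
    rw [hf0] at this
    exact this
  refine ⟨hL, hodd, hanti, ?_, hanti.injOn, ?_⟩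
  · -- MapsTo
    intro y hy
    rw [hf]
    have h1 : 0 ≤ y ^ q := pow_nonneg hy.1 q
    have h2 : y ^ q ≤ 1 := pow_le_one₀ hy.1 hy.2
    exact ⟨by linarith, by linarith⟩
  · -- SurjOn
    have h := intermediate_value_Icc' (zero_le_one) (hfc.continuousOn (s := Set.Icc (0:ℝ) 1))
    rw [hf0, hf1] at h
    exact h
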